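/- Let P ∈ F_q[t; σ] be a twisted polynomial of degree 3 with no linear right divisor in F_q[t; σ]. Then P, viewed as an element of F_{q²}[t; σ] (where σ is extended to F_{q²}), has no linear right divisor in F_{q²}[t; σ] either. -/

import Mathlib

set_option linter.unusedSectionVars false


open Polynomial

/-- Multiplication in the twisted polynomial ring `F_q[t; σ]`, with the rule
`t·a = σ(a)·t`, represented on the coefficient data of ordinary polynomials. -/
noncomputable def skewMul {F : Type*} [Field F] (σ : F → F) (P Q : Polynomial F) :
    Polynomial F :=
  ∑ i ∈ P.support, ∑ j ∈ Q.support,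
    Polynomial.C (P.coeff i * σ^[i] (Q.coeff j)) * Polynomial.X ^ (i + j)

section Helpers

variable {p k : ℕ} [Fact p.Prime] {E : Type*} [Field E] [CharP E p]

lemma sigma_iter (x : E) (i : ℕ) : (fun x : E => x ^ p ^ k)^[i] x = x ^ (p ^ k) ^ i := by
  induction i generalizing x with
  | zero => simp
  | succ n ih =>
    rw [Function.iterate_succ_apply, ih, ← pow_mul, pow_succ]
    ring_nf

lemma pk_pos : 0 < p ^ k := pow_pos (Fact.out (p := p.Prime)).pos k

lemma pki_ne (i : ℕ) : (p ^ k) ^ i ≠ 0 := pow_ne_zero _ (pk_pos (p := p) (k := k)).ne'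

lemma sigma_add (x y : E) : (x + y) ^ p ^ k = x ^ p ^ k + y ^ p ^ k :=
  add_pow_char_pow x y p k

lemma sigma_sub (x y : E) : (x - y) ^ p ^ k = x ^ p ^ k - y ^ p ^ k :=
  sub_pow_char_pow x y k

lemma sigma_neg (x : E) (i : ℕ) : (-x) ^ (p ^ k) ^ i = -(x ^ (p ^ k) ^ i) := by
  rw [← pow_mul, neg_pow, neg_one_pow_char_pow, neg_one_mul]

lemma pk_neg_pow (x : E) (n : ℕ) : (-x) ^ p ^ n = -(x ^ p ^ n) := by
  rw [neg_pow, neg_one_pow_char_pow, neg_one_mul]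

/-- The "norm" sequence `N_i(b) = σ^{i-1}(b)⋯σ(b)·b`. -/
noncomputable def twn (s : ℕ) (b : E) : ℕ → E
  | 0 => 1
  | i + 1 => b ^ s ^ i * twn s b i

/-- Skew evaluation as an additive map. -/
noncomputable def evAM (s : ℕ) (b : E) : Polynomial E →+ E where
  toFun Q := Q.sum fun i a => a * twn s b i
  map_zero' := Polynomial.sum_zero_index _
  map_add' Q R := Polynomial.sum_add_index Q R (fun i a => a * twn s b i)
    (fun i => zero_mul _) (fun i a a' => add_mul a a' _)

lemma evAM_apply (s : ℕ) (b : E) (Q : Polynomial E) :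
    evAM s b Q = Q.sum fun i a => a * twn s b i := rfl

lemma evAM_monomial (s : ℕ) (b : E) (n : ℕ) (a : E) :
    evAM s b (monomial n a) = a * twn s b n := by
  rw [evAM_apply]
  exact Polynomial.sum_monomial_index a _ (zero_mul _)

lemma evAM_C_mul_X_pow (s : ℕ) (b : E) (n : ℕ) (a : E) :
    evAM s b (C a * X ^ n) = a * twn s b n := by
  rw [C_mul_X_pow_eq_monomial, evAM_monomial]

/-- Key lemma A: anything right-divisible by `X - C b` skew-evaluates to `0` at `b`. -/
lemma evAM_skewMul_linear (R : Polynomial E) (b : E) :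
    evAM (p ^ k) b (skewMul (fun x : E => x ^ p ^ k) R (X - C b)) = 0 := by
  unfold skewMul
  rw [map_sum]
  refine Finset.sum_eq_zero fun i _ => ?_
  rw [map_sum]
  have hsupp : (X - C b : Polynomial E).support ⊆ ({0, 1} : Finset ℕ) := by
    intro j hj
    by_contra hj2
    simp only [Finset.mem_insert, Finset.mem_singleton] at hj2
    push_neg at hj2
    have : (X - C b : Polynomial E).coeff j = 0 := by
      simp [coeff_X, coeff_C, hj2.1, hj2.2, Ne.symm hj2.2]
    exact (Polynomial.mem_support_iff.mp hj) this
  rw [Finset.sum_subset hsupp]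
  · have h0 : (X - C b : Polynomial E).coeff 0 = -b := by simp
    have h1 : (X - C b : Polynomial E).coeff 1 = 1 := by simp
    rw [Finset.sum_insert (by simp), Finset.sum_singleton]
    rw [evAM_C_mul_X_pow, evAM_C_mul_X_pow, h0, h1]
    rw [sigma_iter, sigma_iter, sigma_neg, one_pow]
    have : twn (p ^ k) b (i + 1) = b ^ (p ^ k) ^ i * twn (p ^ k) b i := rfl
    rw [Nat.add_zero, this]
    ring
  · intro j _ hj
    have : (X - C b : Polynomial E).coeff j = 0 := Polynomial.notMem_support_iff.mp hj
    rw [evAM_C_mul_X_pow, this, sigma_iter, zero_pow (pki_ne i), mul_zero, zero_mul]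

lemma evAM_eq_sum_range (s : ℕ) (b : E) (Q : Polynomial E) (hQ : Q.natDegree < 4) :
    evAM s b Q = ∑ i ∈ Finset.range 4, Q.coeff i * twn s b i := by
  rw [evAM_apply]
  exact Polynomial.sum_over_range' Q (f := fun i a => a * twn s b i) (fun n => zero_mul _) 4 hQ

/-- From a skew factorization with linear right factor, the evaluation vanishes. -/
lemma root_of_factor (Q R : Polynomial E) (b : E) (hd : Q.natDegree < 4)
    (h : Q = skewMul (fun x : E => x ^ p ^ k) R (X - C b)) :
    Q.coeff 0 + Q.coeff 1 * b + Q.coeff 2 * (b ^ p ^ k * b)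
      + Q.coeff 3 * ((b ^ p ^ k) ^ p ^ k * (b ^ p ^ k * b)) = 0 := by
  have h0 : evAM (p ^ k) b Q = 0 := by rw [h]; exact evAM_skewMul_linear R b
  rw [evAM_eq_sum_range _ _ _ hd] at h0
  simp only [Finset.sum_range_succ, Finset.sum_range_zero, zero_add] at h0
  have t0 : twn (p ^ k) b 0 = 1 := rfl
  have t1 : twn (p ^ k) b 1 = b ^ (p ^ k) ^ 0 * 1 := rfl
  have t2 : twn (p ^ k) b 2 = b ^ (p ^ k) ^ 1 * twn (p ^ k) b 1 := rfl
  have t3 : twn (p ^ k) b 3 = b ^ (p ^ k) ^ 2 * twn (p ^ k) b 2 := rfl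
  rw [t3, t2, t1, t0] at h0
  simp only [pow_zero, pow_one] at h0
  have e2 : b ^ (p ^ k) ^ 2 = (b ^ p ^ k) ^ p ^ k := by
    rw [pow_two, pow_mul]
  rw [e2] at h0
  calc Q.coeff 0 + Q.coeff 1 * b + Q.coeff 2 * (b ^ p ^ k * b)
      + Q.coeff 3 * ((b ^ p ^ k) ^ p ^ k * (b ^ p ^ k * b))
      = Q.coeff 0 * 1 + Q.coeff 1 * (b * 1) + Q.coeff 2 * (b ^ p ^ k * (b * 1))
        + Q.coeff 3 * ((b ^ p ^ k) ^ p ^ k * (b ^ p ^ k * (b * 1))) := by ring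
    _ = 0 := h0

end Helpers

section BSide

variable {p k : ℕ} [Fact p.Prime] {E : Type*} [Field E] [CharP E p]

lemma skewMul_def' (σ : E → E) (P Q : Polynomial E) :
    skewMul σ P Q = P.sum fun i a => Q.sum fun j c => C (a * σ^[i] c) * X ^ (i + j) := by
  unfold skewMul
  rw [Polynomial.sum_def]
  refine Finset.sum_congr rfl fun i _ => ?_
  rw [Polynomial.sum_def]

lemma skewMul_monomial (i j : ℕ) (a c : E) :
    skewMul (fun x : E => x ^ p ^ k) (monomial i a) (monomial j c)
      = monomial (i + j) (a * c ^ (p ^ k) ^ i) := by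
  unfold skewMul
  rcases eq_or_ne a 0 with rfl | ha
  · simp [Polynomial.monomial_zero_right]
  rcases eq_or_ne c 0 with rfl | hc
  · simp [Polynomial.monomial_zero_right, zero_pow (pki_ne (p := p) (k := k) i)]
  · rw [Polynomial.support_monomial i ha, Polynomial.support_monomial j hc]
    simp [coeff_monomial, sigma_iter, C_mul_X_pow_eq_monomial]

lemma skewMul_add_left (σ : E → E) (P P' Q : Polynomial E) :
    skewMul σ (P + P') Q = skewMul σ P Q + skewMul σ P' Q := by
  rw [skewMul_def', skewMul_def', skewMul_def']
  refine Polynomial.sum_add_index P P' _ (fun i => ?_) (fun i a a' => ?_)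
  · simp [Polynomial.sum_def]
  · rw [Polynomial.sum_def, Polynomial.sum_def, Polynomial.sum_def,
      ← Finset.sum_add_distrib]
    refine Finset.sum_congr rfl fun j _ => ?_
    rw [add_mul, C_add, add_mul]

lemma skewMul_add_right (P Q Q' : Polynomial E) :
    skewMul (fun x : E => x ^ p ^ k) P (Q + Q')
      = skewMul (fun x : E => x ^ p ^ k) P Q + skewMul (fun x : E => x ^ p ^ k) P Q' := by
  rw [skewMul_def', skewMul_def', skewMul_def']
  rw [Polynomial.sum_def, Polynomial.sum_def, Polynomial.sum_def, ← Finset.sum_add_distrib]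
  refine Finset.sum_congr rfl fun i _ => ?_
  refine Polynomial.sum_add_index Q Q' _ (fun j => ?_) (fun j c c' => ?_)
  · simp [sigma_iter, zero_pow (pki_ne (p := p) (k := k) i)]
  · rw [sigma_iter, sigma_iter, sigma_iter, ← pow_mul,
      add_pow_char_pow c c' p (k * i), mul_add, C_add, add_mul]

/-- Key lemma B: evaluation zero gives a skew factorization. -/
lemma factor_of_root (Q : Polynomial E) (hQ : Q.natDegree < 4) (b : E)
    (hg : Q.coeff 0 + Q.coeff 1 * b + Q.coeff 2 * (b ^ p ^ k * b)
      + Q.coeff 3 * ((b ^ p ^ k) ^ p ^ k * (b ^ p ^ k * b)) = 0) :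
    ∃ R, Q = skewMul (fun x : E => x ^ p ^ k) R (X - C b) := by
  refine ⟨monomial 2 (Q.coeff 3)
    + monomial 1 (Q.coeff 2 + Q.coeff 3 * (b ^ p ^ k) ^ p ^ k)
    + monomial 0 (Q.coeff 1 + (Q.coeff 2 + Q.coeff 3 * (b ^ p ^ k) ^ p ^ k) * b ^ p ^ k), ?_⟩
  have hX : (X - C b : Polynomial E) = monomial 1 1 + monomial 0 (-b) := by
    rw [sub_eq_add_neg, monomial_one_one_eq_X, monomial_neg, monomial_zero_left]
  rw [hX, skewMul_add_left, skewMul_add_left, skewMul_add_right, skewMul_add_right,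
    skewMul_add_right, skewMul_monomial, skewMul_monomial, skewMul_monomial,
    skewMul_monomial, skewMul_monomial, skewMul_monomial]
  conv_lhs => rw [Q.as_sum_range' 4 hQ]
  have hneg : ∀ (x : E) (n : ℕ), (-x) ^ p ^ n = -(x ^ p ^ n) := fun x n => by
    rw [neg_pow, neg_one_pow_char_pow, neg_one_mul]
  have hg2 := hg
  simp only [Finset.sum_range_succ, Finset.sum_range_zero, zero_add, ← pow_mul,
    ← pow_add, Nat.mul_zero, Nat.mul_one, mul_two, pow_zero, pow_one] at hg2 ⊢
  simp only [hneg, one_pow, mul_neg, mul_one]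
  apply Polynomial.ext
  intro n
  simp only [coeff_add, coeff_monomial, coeff_neg]
  split_ifs <;> first | omega | ring1 | linear_combination hg2

end BSide

section Key

variable {p m k : ℕ} [Fact p.Prime] {F K : Type*} [Field F] [Field K] [Algebra F K]
    [Fintype F] [Fintype K] [CharP F p] [CharP K p]

/-- Fixed points of `x ↦ x^(pᵐ)` in `K` are exactly the image of `F`. -/
lemma range_char (hF : Fintype.card F = p ^ m) (z : K)
    (hz : z ^ p ^ m = z) : ∃ t : F, algebraMap F K t = z := by
  classical
  have hinj : Function.Injective (algebraMap F K) := (algebraMap F K).injective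
  have hq1 : 1 < p ^ m := by
    rw [← hF]; exact Fintype.one_lt_card
  set f : Polynomial K := X ^ p ^ m - X with hf
  have hfne : f ≠ 0 := by
    intro hc
    have h1 : f.coeff (p ^ m) = 1 := by
      rw [hf]; simp [coeff_X_pow, coeff_X]; omega
    rw [hc] at h1
    simp at h1
  have hdeg : f.natDegree ≤ p ^ m := by
    refine le_trans (natDegree_sub_le _ _) ?_
    simp [natDegree_X_pow, natDegree_X]
    omega
  have hpowF : ∀ t : F, t ^ p ^ m = t := fun t => by
    rw [← hF]; exact FiniteField.pow_card t
  have himg : (Finset.univ.image (algebraMap F K)) ⊆ f.roots.toFinset := by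
    intro y hy
    rcases Finset.mem_image.mp hy with ⟨t, _, rfl⟩
    rw [Multiset.mem_toFinset, mem_roots hfne]
    simp [hf, IsRoot, ← map_pow, hpowF]
  have hcard : (Finset.univ.image (algebraMap F K)).card = p ^ m := by
    rw [Finset.card_image_of_injective _ hinj, Finset.card_univ, hF]
  have hroots : f.roots.toFinset.card ≤ p ^ m :=
    le_trans (Multiset.toFinset_card_le _) (le_trans (Polynomial.card_roots' f) hdeg)
  have heq : Finset.univ.image (algebraMap F K) = f.roots.toFinset :=
    Finset.eq_of_subset_of_card_le himg (by rw [hcard]; exact hroots)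
  have hzmem : z ∈ f.roots.toFinset := by
    rw [Multiset.mem_toFinset, mem_roots hfne]
    simp [hf, IsRoot, hz]
  rw [← heq] at hzmem
  rcases Finset.mem_image.mp hzmem with ⟨t, _, ht⟩
  exact ⟨t, ht⟩

lemma key (hF : Fintype.card F = p ^ m) (hK : Fintype.card K = (p ^ m) ^ 2)
    (a0 a1 a2 a3 : F) (ha3 : a3 ≠ 0) (b : K)
    (hgb : algebraMap F K a0 + algebraMap F K a1 * b
        + algebraMap F K a2 * (b ^ p ^ k * b)
        + algebraMap F K a3 * ((b ^ p ^ k) ^ p ^ k * (b ^ p ^ k * b)) = 0) :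
    ∃ x : F, a0 + a1 * x + a2 * (x ^ p ^ k * x)
        + a3 * ((x ^ p ^ k) ^ p ^ k * (x ^ p ^ k * x)) = 0 := by
  by_contra hno
  push_neg at hno
  set φ := algebraMap F K with hφ
  have hinj : Function.Injective φ := (algebraMap F K).injective
  have hpowF : ∀ t : F, t ^ p ^ m = t := fun t => by
    rw [← hF]; exact FiniteField.pow_card t
  have hKpow : ∀ z : K, (z ^ p ^ m) ^ p ^ m = z := fun z => by
    rw [← pow_mul, ← pow_two, ← hK]; exact FiniteField.pow_card z
  have hφfix : ∀ t : F, (φ t) ^ p ^ m = φ t := fun t => by rw [← map_pow, hpowF]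
  -- transfer of the evaluation form along φ
  have hφg : ∀ t : F, φ (a0 + a1 * t + a2 * (t ^ p ^ k * t)
      + a3 * ((t ^ p ^ k) ^ p ^ k * (t ^ p ^ k * t)))
      = φ a0 + φ a1 * φ t + φ a2 * ((φ t) ^ p ^ k * φ t)
      + φ a3 * (((φ t) ^ p ^ k) ^ p ^ k * ((φ t) ^ p ^ k * φ t)) := fun t => by
    simp [map_add, map_mul, map_pow]
  -- b is not in the image of F
  have hbnr : ¬ (b ^ p ^ m = b) := by
    intro hb
    obtain ⟨t, rfl⟩ := range_char hF b hb
    refine hno t (hinj ?_)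
    rw [hφg t, map_zero]
    exact hgb
  -- the conjugate root
  set c := b ^ p ^ m with hc
  have hbc : b - c ≠ 0 := sub_ne_zero.mpr fun hbe => hbnr hbe.symm
  have haddm : ∀ x y : K, (x + y) ^ p ^ m = x ^ p ^ m + y ^ p ^ m := fun x y =>
    add_pow_char_pow x y p m
  have hgc : φ a0 + φ a1 * c + φ a2 * (c ^ p ^ k * c)
      + φ a3 * ((c ^ p ^ k) ^ p ^ k * (c ^ p ^ k * c)) = 0 := by
    have h := congrArg (fun z : K => z ^ p ^ m) hgb
    simp only [haddm, mul_pow, hφfix,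
      zero_pow (show p ^ m ≠ 0 from pow_ne_zero m (Nat.Prime.ne_zero Fact.out)),
      show ∀ (z : K) (n : ℕ), (z ^ n) ^ p ^ m = (z ^ p ^ m) ^ n from
        fun z n => pow_right_comm z n (p ^ m)] at h
    rw [← hc] at h
    exact h
  -- the quadratic `L = t² + L1·t + L0` with right roots `b` and `c`
  set L1 : K := (c ^ p ^ k * c - b ^ p ^ k * b) / (b - c) with hL1
  set L0 : K := -(b ^ p ^ k * b) - L1 * b with hL0
  have hLb : L0 + L1 * b + b ^ p ^ k * b = 0 := by rw [hL0]; ring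
  have hkey1 : L1 * (b - c) = c ^ p ^ k * c - b ^ p ^ k * b := by
    rw [hL1]; field_simp
  have hLc : L0 + L1 * c + c ^ p ^ k * c = 0 := by
    rw [hL0]; linear_combination -hkey1
  have hcq : c ^ p ^ m = b := by rw [hc]; exact hKpow b
  -- `L1` and `L0` are fixed by the `pᵐ` Frobenius, hence lie in the image of `F`
  have hL1q : L1 ^ p ^ m = L1 := by
    have h2 := congrArg (fun z : K => z ^ p ^ m) hkey1
    simp only [mul_pow, sub_pow_char_pow,
      show ∀ (z : K) (n : ℕ), (z ^ n) ^ p ^ m = (z ^ p ^ m) ^ n from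
        fun z n => pow_right_comm z n (p ^ m)] at h2
    rw [hcq, ← hc] at h2
    have h3 : (L1 ^ p ^ m - L1) * (b - c) = 0 := by linear_combination -h2 - hkey1
    rcases mul_eq_zero.mp h3 with h4 | h4
    · exact sub_eq_zero.mp h4
    · exact absurd h4 hbc
  have hL0q : L0 ^ p ^ m = L0 := by
    rw [hL0]
    rw [show -(b ^ p ^ k * b) - L1 * b = -(b ^ p ^ k * b + L1 * b) from by ring]
    rw [pk_neg_pow, haddm, mul_pow, mul_pow, hL1q,
      show (b ^ p ^ k) ^ p ^ m = (b ^ p ^ m) ^ p ^ k from pow_right_comm b _ _,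
      ← hc]
    linear_combination hkey1
  obtain ⟨t1, ht1⟩ := range_char hF L1 hL1q
  obtain ⟨t0, ht0⟩ := range_char hF L0 hL0q
  -- the `star` identity: division of `P` by `L` with linear remainder `d1·z + d0`
  set d1 : K := φ a1 - φ a3 * L0 ^ p ^ k - (φ a2 - φ a3 * L1 ^ p ^ k) * L1 with hd1
  set d0 : K := φ a0 - (φ a2 - φ a3 * L1 ^ p ^ k) * L0 with hd0
  have haddk : ∀ x y : K, (x + y) ^ p ^ k = x ^ p ^ k + y ^ p ^ k := fun x y =>
    add_pow_char_pow x y p k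
  have hsig : ∀ z : K, (L0 + L1 * z + z ^ p ^ k * z) ^ p ^ k
      = L0 ^ p ^ k + L1 ^ p ^ k * z ^ p ^ k + (z ^ p ^ k) ^ p ^ k * z ^ p ^ k := by
    intro z; rw [haddk, haddk, mul_pow, mul_pow]
  have hstar : ∀ z : K, φ a0 + φ a1 * z + φ a2 * (z ^ p ^ k * z)
      + φ a3 * ((z ^ p ^ k) ^ p ^ k * (z ^ p ^ k * z))
      = φ a3 * ((L0 + L1 * z + z ^ p ^ k * z) ^ p ^ k * z)
      + (φ a2 - φ a3 * L1 ^ p ^ k) * (L0 + L1 * z + z ^ p ^ k * z)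
      + d1 * z + d0 := by
    intro z
    rw [hsig z, hd1, hd0]
    ring
  have hpkne : (p : ℕ) ^ k ≠ 0 := pow_ne_zero k (Nat.Prime.ne_zero Fact.out)
  have hdb : d1 * b + d0 = 0 := by
    have h := hstar b
    rw [hgb, hLb, zero_pow hpkne] at h
    linear_combination -h
  have hdc : d1 * c + d0 = 0 := by
    have h := hstar c
    rw [hgc, hLc, zero_pow hpkne] at h
    linear_combination -h
  have hd1z : d1 = 0 := by
    have h3 : d1 * (b - c) = 0 := by linear_combination hdb - hdc
    rcases mul_eq_zero.mp h3 with h4 | h4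
    · exact h4
    · exact absurd h4 hbc
  have hd0z : d0 = 0 := by linear_combination hdb - b * hd1z
  have hstar2 : ∀ z : K, φ a0 + φ a1 * z + φ a2 * (z ^ p ^ k * z)
      + φ a3 * ((z ^ p ^ k) ^ p ^ k * (z ^ p ^ k * z))
      = φ a3 * ((L0 + L1 * z + z ^ p ^ k * z) ^ p ^ k * z)
      + (φ a2 - φ a3 * L1 ^ p ^ k) * (L0 + L1 * z + z ^ p ^ k * z) := by
    intro z; rw [hstar z, hd1z, hd0z]; ring
  -- everything descends to `F`
  set l : F → F := fun t => t0 + t1 * t + t ^ p ^ k * t with hldef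
  have hφl : ∀ t : F, φ (l t) = L0 + L1 * φ t + (φ t) ^ p ^ k * φ t := by
    intro t
    simp only [hldef, map_add, map_mul, map_pow, ht0, ht1]
    rw [show φ t0 = L0 from ht0, show φ t1 = L1 from ht1]
  have hstarF : ∀ t : F, a0 + a1 * t + a2 * (t ^ p ^ k * t)
      + a3 * ((t ^ p ^ k) ^ p ^ k * (t ^ p ^ k * t))
      = a3 * ((l t) ^ p ^ k * t) + (a2 - a3 * t1 ^ p ^ k) * (l t) := by
    intro t
    apply hinj
    rw [hφg t, hstar2 (φ t)]
    simp only [map_add, map_mul, map_sub, map_pow, hφl t, ht1]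
    rw [show φ t1 = L1 from ht1]
  have hlne : ∀ t : F, l t ≠ 0 := by
    intro t hl
    refine hno t ?_
    rw [hstarF t, hl, zero_pow hpkne]
    ring
  have htw : a2 - a3 * t1 ^ p ^ k ≠ 0 := by
    intro hw
    refine hno 0 ?_
    rw [hstarF 0, hw]
    ring
  have haddkF : ∀ x y : F, (x + y) ^ p ^ k = x ^ p ^ k + y ^ p ^ k := fun x y =>
    add_pow_char_pow x y p k
  have hsubkF : ∀ x y : F, (x - y) ^ p ^ k = x ^ p ^ k - y ^ p ^ k := fun x y =>
    sub_pow_char_pow x y k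
  have hlsig : ∀ t : F, (l t) ^ p ^ k
      = t0 ^ p ^ k + t1 ^ p ^ k * t ^ p ^ k + (t ^ p ^ k) ^ p ^ k * t ^ p ^ k := by
    intro t
    simp only [hldef]
    rw [haddkF, haddkF, mul_pow, mul_pow]
  -- collision of the twisting map forces a root of `l` in `F`
  have hinj2 : ∀ x y : F, x ≠ 0 → y ≠ 0 →
      x * (l x) ^ p ^ k * l y = y * (l y) ^ p ^ k * l x → x = y := by
    intro x y hx hy hcol
    by_contra hxy
    have hmn : l x ≠ l y := by
      intro he
      apply hxy
      have hne : (l x) ^ p ^ k * l x ≠ 0 :=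
        mul_ne_zero (pow_ne_zero _ (hlne x)) (hlne x)
      apply mul_right_cancel₀ hne
      calc x * ((l x) ^ p ^ k * l x) = x * (l x) ^ p ^ k * l y := by rw [← he]; ring
        _ = y * (l y) ^ p ^ k * l x := hcol
        _ = y * ((l x) ^ p ^ k * l x) := by rw [he]; ring
    have hden : l y - l x ≠ 0 := sub_ne_zero.mpr (Ne.symm hmn)
    set z : F := (x * l y - y * l x) / (l y - l x) with hz
    have hlz : l z * ((l y - l x) ^ p ^ k * (l y - l x))
        = t0 * ((l y - l x) ^ p ^ k * (l y - l x))
        + t1 * ((x * l y - y * l x) * (l y - l x) ^ p ^ k)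
        + (x * l y - y * l x) ^ p ^ k * (x * l y - y * l x) := by
      rw [show l z = t0 + t1 * z + z ^ p ^ k * z from rfl, hz]
      rw [div_pow]
      field_simp
    have hz0 : l z * ((l y - l x) ^ p ^ k * (l y - l x)) = 0 := by
      rw [hlz]
      rw [hsubkF (x * l y) (y * l x), mul_pow, mul_pow, hsubkF (l y) (l x),
        hlsig x, hlsig y]
      have hcol' := hcol
      rw [hlsig x, hlsig y] at hcol'
      simp only [hldef] at hcol' ⊢
      linear_combination (x ^ p ^ k - y ^ p ^ k) * hcol' 
    have hlz0 : l z = 0 := by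
      rcases mul_eq_zero.mp hz0 with h4 | h4
      · exact h4
      · exact absurd h4 (mul_ne_zero (pow_ne_zero _ hden) hden)
    exact hlne z hlz0
  -- pigeonhole: the twisting map is a bijection of `F∖{0}`, so it attains `-(a2 - a3·t1^{p^k})`
  have hPsine : ∀ t : {t : F // t ≠ 0}, a3 * t.1 * (l t.1) ^ p ^ k / l t.1 ≠ 0 := fun t =>
    div_ne_zero (mul_ne_zero (mul_ne_zero ha3 t.2) (pow_ne_zero _ (hlne t.1))) (hlne t.1)
  set Ψ : {t : F // t ≠ 0} → {t : F // t ≠ 0} := fun t => ⟨_, hPsine t⟩ with hΨ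
  have hΨinj : Function.Injective Ψ := by
    intro x y hxy
    have h1 : a3 * x.1 * (l x.1) ^ p ^ k / l x.1 = a3 * y.1 * (l y.1) ^ p ^ k / l y.1 := by
      have := congrArg Subtype.val hxy
      simpa [hΨ] using this
    apply Subtype.ext
    apply hinj2 x.1 y.1 x.2 y.2
    rw [div_eq_div_iff (hlne x.1) (hlne y.1)] at h1
    apply mul_left_cancel₀ ha3
    linear_combination h1
  have hΨsurj : Function.Surjective Ψ := Finite.injective_iff_surjective.mp hΨinj
  obtain ⟨t, ht⟩ := hΨsurj ⟨-(a2 - a3 * t1 ^ p ^ k), neg_ne_zero.mpr htw⟩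
  have ht' : a3 * t.1 * (l t.1) ^ p ^ k / l t.1 = -(a2 - a3 * t1 ^ p ^ k) := by
    have := congrArg Subtype.val ht
    simpa [hΨ] using this
  refine hno t.1 ?_
  rw [hstarF t.1]
  rw [div_eq_iff (hlne t.1)] at ht'
  linear_combination ht'

end Key

/-- a degree-3 twisted polynomial over `F_q` with no linear right
divisor in `F_q[t;σ]` has no linear right divisor in `F_{q²}[t;σ]` either. -/
theorem stmt8 (p m k : ℕ) [Fact p.Prime]
    (F K : Type*) [Field F] [Field K] [Algebra F K]
    [Fintype F] [Fintype K] [CharP F p] [CharP K p]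
    (hF : Fintype.card F = p ^ m) (hK : Fintype.card K = (p ^ m) ^ 2)
    (P : Polynomial F) (hdeg : P.natDegree = 3)
    (h : ¬ ∃ (R : Polynomial F) (b : F),
        P = skewMul (fun x : F => x ^ (p ^ k)) R (X - C b)) :
    ¬ ∃ (R : Polynomial K) (b : K),
        P.map (algebraMap F K) = skewMul (fun x : K => x ^ (p ^ k)) R (X - C b) := by
  rintro ⟨R, b, hRb⟩
  have hd4 : P.natDegree < 4 := by rw [hdeg]; norm_num
  have hPne : P ≠ 0 := fun h0 => by simp [h0] at hdeg
  have ha3 : P.coeff 3 ≠ 0 := by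
    have := Polynomial.leadingCoeff_ne_zero.mpr hPne
    rwa [Polynomial.leadingCoeff, hdeg] at this
  have hmapd : (P.map (algebraMap F K)).natDegree < 4 :=
    lt_of_le_of_lt Polynomial.natDegree_map_le (by rw [hdeg]; norm_num)
  have hgb := root_of_factor (p := p) (k := k) _ R b hmapd hRb
  simp only [Polynomial.coeff_map] at hgb
  obtain ⟨x, hx⟩ := key (p := p) (m := m) (k := k) hF hK
    (P.coeff 0) (P.coeff 1) (P.coeff 2) (P.coeff 3) ha3 b hgb
  obtain ⟨R0, hR0⟩ := factor_of_root (p := p) (k := k) P hd4 x hx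
  exact h ⟨R0, x, hR0⟩
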